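/- Suppose an m×n Boolean measurement matrix M, with n ≥ d, is (e0, e1, e'0, e'1)-resilient for d-sparse vectors. Then (max{e0, e1} + 1)·⌊d/(e'0 + e'1 + 1)⌋ ≤ m. -/

import Mathlib

/-- Support of a Boolean vector. -/
def suppB {ι : Type*} [Fintype ι] (x : ι → Bool) : Finset ι :=
  Finset.univ.filter (fun i => x i = true)

/-- The measurement outcome `M[x]`: bitwise OR of the columns of `M` picked by `supp x`. -/
def orMeasure {ρ ι : Type*} [Fintype ι] (M : ρ → ι → Bool) (x : ι → Bool) : ρ → Bool :=
  fun i => decide (∃ j, M i j = true ∧ x j = true)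

/-- The ordered pair `(x, y)` is `(e0, e1)`-close. -/
def ClosePair {ι : Type*} [Fintype ι] [DecidableEq ι] (e0 e1 : ℕ) (x y : ι → Bool) : Prop :=
  (suppB y \ suppB x).card ≤ e0 ∧ (suppB x \ suppB y).card ≤ e1

/-- `(e0, e1, e0', e1')`-resilient measurement matrix for `d`-sparse vectors. -/
def Resilient {ρ ι : Type*} [Fintype ρ] [DecidableEq ρ] [Fintype ι] [DecidableEq ι]
    (M : ρ → ι → Bool) (d e0 e1 e0' e1' : ℕ) : Prop :=
  ∀ y : ρ → Bool, ∃ z : ι → Bool, ∀ x : ι → Bool, (suppB x).card ≤ d →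
    ¬ ClosePair e0' e1' x z → ¬ ClosePair e0 e1 (orMeasure M x) y

lemma card_filter_val_lt (n a : ℕ) (h : a ≤ n) :
    (Finset.univ.filter (fun j : Fin n => (j : ℕ) < a)).card = a := by
  have himg : (Finset.univ.filter (fun j : Fin n => (j : ℕ) < a)).image Fin.val
      = Finset.range a := by
    ext b
    simp only [Finset.mem_image, Finset.mem_filter, Finset.mem_range, Finset.mem_univ,
      true_and]
    constructor
    · rintro ⟨j, hj, rfl⟩; exact hj
    · intro hb; exact ⟨⟨b, lt_of_lt_of_le hb h⟩, hb, rfl⟩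
  rw [← Finset.card_image_of_injective _ Fin.val_injective, himg, Finset.card_range]

/-- Trade-off between noise tolerance and reconstruction ambiguity. -/
theorem stmt12 {m n : ℕ} (M : Fin m → Fin n → Bool) (d e0 e1 e0' e1' : ℕ)
    (hdn : d ≤ n) (hres : Resilient M d e0 e1 e0' e1') :
    (max e0 e1 + 1) * (d / (e0' + e1' + 1)) ≤ m := by
  by_contra hlt
  push_neg at hlt
  set k := e0' + e1' + 1 with hk
  set t := d / k with ht
  set e := max e0 e1 with he
  have htk : t * k ≤ d := Nat.div_mul_le_self d k
  -- the chain of test vectors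
  set x : ℕ → Fin n → Bool := fun i j => decide ((j : ℕ) < i * k) with hx
  have hsupp : ∀ i, suppB (x i) = Finset.univ.filter (fun j : Fin n => (j : ℕ) < i * k) := by
    intro i; ext j; simp [suppB, hx]
  have hcard : ∀ i, i ≤ t → (suppB (x i)).card = i * k := by
    intro i hi
    rw [hsupp]
    exact card_filter_val_lt n (i * k)
      (le_trans (le_trans (Nat.mul_le_mul_right k hi) htk) hdn)
  have hsparse : ∀ i, i ≤ t → (suppB (x i)).card ≤ d := by
    intro i hi
    rw [hcard i hi]
    exact le_trans (Nat.mul_le_mul_right k hi) htk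
  -- measurement supports are nested
  have hmono : ∀ i, suppB (orMeasure M (x i)) ⊆ suppB (orMeasure M (x (i+1))) := by
    intro i r hr
    simp only [suppB, orMeasure, Finset.mem_filter, decide_eq_true_eq] at hr ⊢
    obtain ⟨-, j, hMj, hxj⟩ := hr
    refine ⟨Finset.mem_univ r, j, hMj, ?_⟩
    simp only [hx, decide_eq_true_eq] at hxj ⊢
    calc (j : ℕ) < i * k := hxj
      _ ≤ (i+1) * k := Nat.mul_le_mul_right k (Nat.le_succ i)
  set w : ℕ → ℕ := fun i => (suppB (orMeasure M (x i))).card with hw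
  have hwm : ∀ i, w i ≤ m := by
    intro i
    calc w i ≤ Finset.univ.card := Finset.card_le_univ _
      _ = m := by simp
  -- find a small gap
  have hgap : ∃ i < t, w (i+1) < w i + (e + 1) := by
    by_contra hg
    push_neg at hg
    have key : ∀ i, i ≤ t → (e + 1) * i ≤ w i := by
      intro i hi
      induction i with
      | zero => simp
      | succ i ih =>
        have h1 := hg i (lt_of_lt_of_le (Nat.lt_succ_self i) hi)
        have h2 := ih (le_trans (Nat.le_succ i) hi)
        calc (e+1) * (i+1) = (e+1) * i + (e+1) := by ring
          _ ≤ w i + (e+1) := by omega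
          _ ≤ w (i+1) := h1
    have := key t le_rfl
    have := hwm t
    omega
  obtain ⟨i, hit, hgapi⟩ := hgap
  set A := suppB (orMeasure M (x i)) with hA
  set B := suppB (orMeasure M (x (i+1))) with hB
  have hAB : A ⊆ B := hmono i
  have hBA : (B \ A).card ≤ e := by
    rw [Finset.card_sdiff_of_subset hAB]
    have hAle : A.card ≤ B.card := Finset.card_le_card hAB
    have : B.card = w (i+1) := rfl
    have : A.card = w i := rfl
    omega
  obtain ⟨D0, hD0sub, hD0card⟩ :=
    Finset.exists_subset_card_eq (min_le_left (B \ A).card e0)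
  set y : Fin m → Bool := fun r => decide (r ∈ A ∪ D0) with hy
  have hsy : suppB y = A ∪ D0 := by
    ext r; simp [suppB, hy]
  have hD0B : D0 ⊆ B := le_trans hD0sub (Finset.sdiff_subset)
  have close1 : ClosePair e0 e1 (orMeasure M (x i)) y := by
    constructor
    · have hsub : suppB y \ A ⊆ D0 := by
        rw [hsy]
        intro r hr
        simp only [Finset.mem_sdiff, Finset.mem_union] at hr
        tauto
      calc (suppB y \ A).card ≤ D0.card := Finset.card_le_card hsub
        _ ≤ e0 := by omega
    · have hsub : A \ suppB y ⊆ ∅ := by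
        rw [hsy]
        intro r hr
        simp only [Finset.mem_sdiff, Finset.mem_union] at hr
        tauto
      exact (Finset.card_le_card hsub).trans (by simp)
  have close2 : ClosePair e0 e1 (orMeasure M (x (i+1))) y := by
    constructor
    · have hsub : suppB y \ B ⊆ ∅ := by
        rw [hsy]
        intro r hr
        simp only [Finset.mem_sdiff, Finset.mem_union] at hr
        rcases hr.1 with h | h
        · exact absurd (hAB h) hr.2
        · exact absurd (hD0B h) hr.2
      exact (Finset.card_le_card hsub).trans (by simp)
    · have heq : B \ suppB y = (B \ A) \ D0 := by
        rw [hsy]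
        ext r
        simp only [Finset.mem_sdiff, Finset.mem_union]
        tauto
      rw [heq, Finset.card_sdiff_of_subset hD0sub, hD0card]
      have hmx : e = e0 ∨ e = e1 := max_choice e0 e1
      have h0 : e0 ≤ e := le_max_left e0 e1
      have h1 : e1 ≤ e := le_max_right e0 e1
      omega
  obtain ⟨z, hz⟩ := hres y
  have hc1 : ClosePair e0' e1' (x i) z := by
    by_contra h
    exact hz (x i) (hsparse i (le_of_lt hit)) h close1
  have hc2 : ClosePair e0' e1' (x (i+1)) z := by
    by_contra h
    exact hz (x (i+1)) (hsparse (i+1) hit) h close2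
  -- final contradiction
  have hxsub : suppB (x i) ⊆ suppB (x (i+1)) := by
    intro j hj
    rw [hsupp] at hj ⊢
    simp only [Finset.mem_filter] at hj ⊢
    refine ⟨hj.1, lt_of_lt_of_le hj.2 (Nat.mul_le_mul_right k (Nat.le_succ i))⟩
  have hG : (suppB (x (i+1)) \ suppB (x i)).card = k := by
    rw [Finset.card_sdiff_of_subset hxsub, hcard i (le_of_lt hit), hcard (i+1) hit]
    have : i * k ≤ (i+1) * k := Nat.mul_le_mul_right k (Nat.le_succ i)
    have : (i+1) * k = i * k + k := by ring
    omega
  have hGsub : suppB (x (i+1)) \ suppB (x i) ⊆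
      (suppB z \ suppB (x i)) ∪ (suppB (x (i+1)) \ suppB z) := by
    intro j hj
    simp only [Finset.mem_sdiff, Finset.mem_union] at hj ⊢
    by_cases hzj : j ∈ suppB z
    · exact Or.inl ⟨hzj, hj.2⟩
    · exact Or.inr ⟨hj.1, hzj⟩
  have hfin : k ≤ e0' + e1' := by
    calc k = (suppB (x (i+1)) \ suppB (x i)).card := hG.symm
      _ ≤ ((suppB z \ suppB (x i)) ∪ (suppB (x (i+1)) \ suppB z)).card :=
        Finset.card_le_card hGsub
      _ ≤ (suppB z \ suppB (x i)).card + (suppB (x (i+1)) \ suppB z).card :=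
        Finset.card_union_le _ _
      _ ≤ e0' + e1' := Nat.add_le_add hc1.1 hc2.2
  omega
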